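/- For the focal surface X*(u,v) = γ(u) + (1/κ(u))N₁(u) + (tan v/κ(u))N₂ of a tubular surface around a unit-speed planar curve γ with curvature κ: the u-parameter curves are geodesics (X*_uu × N* = 0 with N* = -T) if and only if -κ''κ + 2(κ')² = 0, whose nontrivial solutions are κ(u) = -1/(c₁u + c₂) for real constants c₁, c₂. -/

import Mathlib

open Real RealInnerProductSpace
noncomputable def cross3 (x y : EuclideanSpace ℝ (Fin 3)) : EuclideanSpace ℝ (Fin 3) :=
  WithLp.toLp 2 ![x 1 * y 2 - x 2 * y 1,
    x 2 * y 0 - x 0 * y 2,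
    x 0 * y 1 - x 1 * y 0]

lemma cross3_smul_left (r : ℝ) (a b : EuclideanSpace ℝ (Fin 3)) :
    cross3 (r • a) b = r • cross3 a b := by
  ext i; fin_cases i <;> simp [cross3] <;> ring

lemma cross3_add_left (a a' b : EuclideanSpace ℝ (Fin 3)) :
    cross3 (a + a') b = cross3 a b + cross3 a' b := by
  ext i; fin_cases i <;> simp [cross3] <;> ring

lemma cross3_neg_right (a b : EuclideanSpace ℝ (Fin 3)) :
    cross3 a (-b) = - cross3 a b := by
  ext i; fin_cases i <;> simp [cross3] <;> ring

lemma cross3_antisymm (a b : EuclideanSpace ℝ (Fin 3)) :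
    cross3 a b = - cross3 b a := by
  ext i; fin_cases i <;> simp [cross3] <;> ring

lemma cross3_self (a : EuclideanSpace ℝ (Fin 3)) : cross3 a a = 0 := by
  ext i; fin_cases i <;> simp [cross3] <;> ring

lemma cross3_triple (a b c : EuclideanSpace ℝ (Fin 3)) :
    cross3 (cross3 a b) c = ⟪a, c⟫ • b - ⟪b, c⟫ • a := by
  ext i; fin_cases i <;>
    simp [cross3, PiLp.inner_apply, Fin.sum_univ_three, RCLike.inner_apply, conj_trivial] <;> ring

lemma constOn (f f' : ℝ → ℝ) (hf : ∀ x, HasDerivAt f (f' x) x) (I : Set ℝ)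
    (hI : I.OrdConnected) (h0 : ∀ x ∈ I, f' x = 0) {x y : ℝ} (hx : x ∈ I) (hy : y ∈ I) :
    f x = f y := by
  have key : ∀ a b : ℝ, a ∈ I → b ∈ I → a < b → f a = f b := by
    intro a b ha hb hab
    obtain ⟨c, hc, hceq⟩ := exists_hasDerivAt_eq_slope f f' hab
      (fun z _ => (hf z).continuousAt.continuousWithinAt) (fun z _ => hf z)
    have hcI : c ∈ I := hI.out ha hb (Set.Ioo_subset_Icc_self hc)
    have := h0 c hcI
    rw [this] at hceq
    have hne : b - a ≠ 0 := sub_ne_zero.mpr hab.ne'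
    field_simp at hceq
    linarith
  rcases lt_trichotomy x y with h | h | h
  · exact key x y hx hy h
  · rw [h]
  · exact (key y x hy hx h).symm

theorem stmt11
    (γ T N₁ : ℝ → EuclideanSpace ℝ (Fin 3)) (N₂ : EuclideanSpace ℝ (Fin 3))
    (κ : ℝ → ℝ)
    (hγ : ∀ u, HasDerivAt γ (T u) u)
    (hT : ∀ u, HasDerivAt T (κ u • N₁ u) u)
    (hN₁ : ∀ u, HasDerivAt N₁ ((-κ u) • T u) u)
    (hTT : ∀ u, ⟪T u, T u⟫ = 1)
    (hN₁N₁ : ∀ u, ⟪N₁ u, N₁ u⟫ = 1)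
    (hN₂N₂ : ⟪N₂, N₂⟫ = 1)
    (hTN₁ : ∀ u, ⟪T u, N₁ u⟫ = 0)
    (hTN₂ : ∀ u, ⟪T u, N₂⟫ = 0)
    (hN₁N₂ : ∀ u, ⟪N₁ u, N₂⟫ = 0)
    (horient : ∀ u, cross3 (T u) (N₁ u) = N₂)
    (κ' : ℝ → ℝ) (hκ' : ∀ u, HasDerivAt κ (κ' u) u)
    (κ'' : ℝ → ℝ) (hκ'' : ∀ u, HasDerivAt κ' (κ'' u) u)
    (Xs : ℝ → ℝ → EuclideanSpace ℝ (Fin 3))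
    (hXs : ∀ u v, Xs u v = γ u + (κ u)⁻¹ • N₁ u + (tan v / κ u) • N₂)
    (Xsu Xsv : ℝ → ℝ → EuclideanSpace ℝ (Fin 3))
    (hXsu : ∀ u v, HasDerivAt (fun u' => Xs u' v) (Xsu u v) u)
    (hXsv : ∀ u v, HasDerivAt (fun v' => Xs u v') (Xsv u v) v)
    (u v : ℝ) (Xsuu Xsuv Xsvv : EuclideanSpace ℝ (Fin 3))
    (hXsuu : HasDerivAt (fun u' => Xsu u' v) Xsuu u)
    (hXsuv : HasDerivAt (fun v' => Xsu u v') Xsuv v)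
    (hXsvv : HasDerivAt (fun v' => Xsv u v') Xsvv v)
    (hκ0 : ∀ x, κ x ≠ 0) (hcos : cos v ≠ 0)
    (I : Set ℝ) (hI : I.OrdConnected) (hne : I.Nonempty) :
    (cross3 Xsuu (-T u) = 0 ↔ -κ'' u * κ u + 2 * (κ' u) ^ 2 = 0) ∧
    ((∀ x ∈ I, -κ'' x * κ x + 2 * (κ' x) ^ 2 = 0) →
      ∃ c₁ c₂ : ℝ, ∀ x ∈ I, κ x = -(1 / (c₁ * x + c₂))) := by
  set f : ℝ → ℝ := fun x => -(κ' x) / (κ x) ^ 2 with hfdef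
  set D : ℝ → ℝ := fun x => (-κ'' x * κ x + 2 * κ' x ^ 2) / κ x ^ 3 with hDdef
  -- derivative of f
  have hf : ∀ x, HasDerivAt f (D x) x := by
    intro x
    have h1 : HasDerivAt (fun y => (κ y) ^ 2) (2 * κ x ^ 1 * κ' x) x := by
      exact ((hκ' x).pow 2).congr_deriv (by norm_num)
    have h2 := ((hκ'' x).neg).div h1 (pow_ne_zero 2 (hκ0 x))
    refine h2.congr_deriv ?_
    symm
    simp only [hDdef, Pi.neg_apply]
    rw [div_eq_div_iff (pow_ne_zero 3 (hκ0 x)) (pow_ne_zero 2 (pow_ne_zero 2 (hκ0 x)))]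
    ring
  -- derivative of 1/κ
  have hg : ∀ x, HasDerivAt (fun y => (κ y)⁻¹) (f x) x := by
    intro x
    exact ((hκ' x).inv (hκ0 x)).congr_deriv (by simp [hfdef, neg_div])
  -- Xsu formula
  have hXsuF : ∀ w, Xsu w v = f w • (N₁ w + tan v • N₂) := by
    intro w
    have e1 : (κ w)⁻¹ • ((-κ w) • T w) = (-1 : ℝ) • T w := by
      rw [smul_smul]; congr 1; rw [mul_neg, inv_mul_cancel₀ (hκ0 w)]
    have h2 : HasDerivAt (fun x => (κ x)⁻¹ • N₁ x)
        ((κ w)⁻¹ • ((-κ w) • T w) + f w • N₁ w) w := (hg w).smul (hN₁ w)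
    have h3 : HasDerivAt (fun x => (tan v / κ x) • N₂) ((tan v * f w) • N₂) w := by
      have := (((hκ' w).inv (hκ0 w)).const_mul (tan v)).smul_const N₂
      simpa [div_eq_mul_inv, hfdef, mul_div_assoc, mul_comm, mul_left_comm, neg_div] using this
    have hGd : HasDerivAt (fun x => γ x + (κ x)⁻¹ • N₁ x + (tan v / κ x) • N₂)
        (f w • (N₁ w + tan v • N₂)) w := by
      have h4 := ((hγ w).add h2).add h3
      refine h4.congr_deriv ?_
      rw [e1]
      module
    have heq : (fun u' => Xs u' v) = fun x => γ x + (κ x)⁻¹ • N₁ x + (tan v / κ x) • N₂ :=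
      funext fun x => hXs x v
    have := hXsu w v
    rw [heq] at this
    exact this.unique hGd
  -- Xsuu formula
  have hXsuu' : HasDerivAt (fun x => f x • (N₁ x + tan v • N₂))
      (f u • ((-κ u) • T u) + D u • (N₁ u + tan v • N₂)) u :=
    (hf u).smul ((hN₁ u).add_const (tan v • N₂))
  have Xsuu_eq : Xsuu = f u • ((-κ u) • T u) + D u • (N₁ u + tan v • N₂) := by
    have h5 : (fun u' => Xsu u' v) = fun x => f x • (N₁ x + tan v • N₂) :=
      funext fun x => hXsuF x
    rw [h5] at hXsuu
    exact hXsuu.unique hXsuu'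
  have Xsuu_eq2 : Xsuu = D u • N₁ u + ((D u * tan v) • N₂ + (f u * -κ u) • T u) := by
    rw [Xsuu_eq]; module
  -- basis cross products
  have hN₁T : cross3 (N₁ u) (T u) = -N₂ := by rw [cross3_antisymm, horient]
  have hN₂T : cross3 N₂ (T u) = N₁ u := by
    have h0 : ⟪N₁ u, T u⟫ = (0 : ℝ) := by rw [real_inner_comm]; exact hTN₁ u
    rw [← horient u, cross3_triple, hTT, h0]; simp
  have hC : cross3 Xsuu (-T u) = D u • N₂ - (D u * tan v) • N₁ u := by
    rw [Xsuu_eq2, cross3_neg_right, cross3_add_left, cross3_add_left,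
      cross3_smul_left, cross3_smul_left, cross3_smul_left, hN₁T, hN₂T, cross3_self]
    module
  have hDnum : ∀ x, -κ'' x * κ x + 2 * (κ' x) ^ 2 = D x * κ x ^ 3 := by
    intro x
    have := hκ0 x
    rw [hDdef]
    field_simp
  constructor
  · constructor
    · intro h
      rw [hC] at h
      have : ⟪D u • N₂ - (D u * tan v) • N₁ u, N₂⟫ = (0 : ℝ) := by rw [h, inner_zero_left]
      rw [inner_sub_left, real_inner_smul_left, real_inner_smul_left, hN₂N₂, hN₁N₂] at this
      have hD0 : D u = 0 := by linarith [this]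
      rw [hDnum u, hD0]; ring
    · intro h
      have hD0 : D u = 0 := by
        have h3 := hκ0 u
        have := hDnum u
        rw [h] at this
        have : D u * κ u ^ 3 = 0 := this.symm
        rcases mul_eq_zero.mp this with h' | h'
        · exact h'
        · exact absurd h' (pow_ne_zero 3 h3)
      rw [hC, hD0]; simp
  · intro hyp
    have hD0 : ∀ x ∈ I, D x = 0 := by
      intro x hx
      have h1 := hDnum x
      rw [hyp x hx] at h1
      have : D x * κ x ^ 3 = 0 := h1.symm
      rcases mul_eq_zero.mp this with h' | h'
      · exact h'
      · exact absurd h' (pow_ne_zero 3 (hκ0 x))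
    obtain ⟨x₀, hx₀⟩ := hne
    set a : ℝ := f x₀ with ha
    have hfa : ∀ x ∈ I, f x = a := fun x hx => constOn f D hf I hI hD0 hx hx₀
    set b : ℝ := (κ x₀)⁻¹ - a * x₀ with hb
    have hgab : ∀ x ∈ I, (κ x)⁻¹ = a * x + b := by
      intro x hx
      have hh : ∀ y, HasDerivAt (fun z => (κ z)⁻¹ - a * z) (f y - a) y := by
        intro y
        exact ((hg y).sub ((hasDerivAt_id y).const_mul a)).congr_deriv (by ring)
      have h0 : ∀ y ∈ I, f y - a = 0 := fun y hy => by rw [hfa y hy]; ring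
      have := constOn (fun z => (κ z)⁻¹ - a * z) (fun y => f y - a) hh I hI h0 hx hx₀
      rw [hb]; linarith [this]
    refine ⟨-a, -b, fun x hx => ?_⟩
    have h1 := hgab x hx
    have h2 := hκ0 x
    have h3 : a * x + b ≠ 0 := by
      rw [← h1]; exact inv_ne_zero h2
    rw [show -a * x + -b = -(a * x + b) by ring]
    rw [← h1]
    field_simp
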